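/- Let φ be a spinor on a Spin^c surface satisfying Dφ = Hφ − iτφ̄ with |φ| constant and nonvanishing φ±. Define T^φ_±(X,Y) = Re⟨∇_X φ^±, Y•φ^∓⟩ in an oriented orthonormal frame {t₁,t₂}. Then tr T^φ_± = −Re⟨Dφ^±, φ^∓⟩ = −H|φ^∓|², and T^φ_±(t₁,t₂) = τ|φ^∓|² + T^φ_±(t₂,t₁). -/

import Mathlib

/-- on a Spin^c surface, for a spinor `φ` of constant norm with
`Dφ = Hφ − iτφ̄` and nonvanishing `φ± = (1/2)(φ ± ωφ)` (`ω = i t₁•t₂` the volume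
element), the tensors `T^φ_±(X,Y) = Re⟨∇_X φ^±, Y•φ^∓⟩` satisfy
`tr T^φ_± = −Re⟨Dφ^±, φ^∓⟩ = −H|φ^∓|²` and `T^φ_±(t₁,t₂) = τ|φ^∓|² + T^φ_±(t₂,t₁)`. -/
theorem stmt_14
    {S : Type*} [NormedAddCommGroup S] [InnerProductSpace ℂ S]
    {V : Type*} [AddCommGroup V] [Module ℝ V]
    (g : V →ₗ[ℝ] V →ₗ[ℝ] ℝ)
    (e : Fin 2 → V)
    (horth : ∀ i j, g (e i) (e j) = if i = j then 1 else 0)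
    (cl : V →ₗ[ℝ] S →ₗ[ℂ] S)
    (hclif : ∀ (X Y : V) (ψ : S), cl X (cl Y ψ) + cl Y (cl X ψ) = (-2 * g X Y) • ψ)
    (hskew : ∀ (X : V) (ψ χ : S), (inner ℂ (cl X ψ) χ : ℂ) = -(inner ℂ ψ (cl X χ) : ℂ))
    (nabla : V → S →ₗ[ℝ] S)
    (ω : S →ₗ[ℂ] S)
    (hω : ∀ ψ, ω ψ = Complex.I • cl (e 0) (cl (e 1) ψ))
    (hpar : ∀ (X : V) (ψ : S), nabla X (ω ψ) = ω (nabla X ψ))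
    (φ φp φm : S) (H τ : ℝ)
    (hφp : φp = (1 / 2 : ℝ) • (φ + ω φ))
    (hφm : φm = (1 / 2 : ℝ) • (φ - ω φ))
    (hφp0 : φp ≠ 0) (hφm0 : φm ≠ 0)
    (hnorm : ∀ X : V, (inner ℂ (nabla X φ) φ : ℂ).re = 0)
    (hdirac : (∑ i, cl (e i) (nabla (e i) φ)) = H • φ - (Complex.I * (τ : ℂ)) • ω φ)
    (Tp Tm : V → V → ℝ)
    (hTp : ∀ X Y : V, Tp X Y = (inner ℂ (nabla X φp) (cl Y φm) : ℂ).re)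
    (hTm : ∀ X Y : V, Tm X Y = (inner ℂ (nabla X φm) (cl Y φp) : ℂ).re) :
    ((∑ i, Tp (e i) (e i)) = -(inner ℂ (∑ i, cl (e i) (nabla (e i) φp)) φm : ℂ).re ∧
      (∑ i, Tp (e i) (e i)) = -H * ‖φm‖ ^ 2) ∧
    ((∑ i, Tm (e i) (e i)) = -(inner ℂ (∑ i, cl (e i) (nabla (e i) φm)) φp : ℂ).re ∧
      (∑ i, Tm (e i) (e i)) = -H * ‖φp‖ ^ 2) ∧
    Tp (e 0) (e 1) = τ * ‖φm‖ ^ 2 + Tp (e 1) (e 0) ∧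
    Tm (e 0) (e 1) = τ * ‖φp‖ ^ 2 + Tm (e 1) (e 0) := by
  have rsmul : ∀ (r : ℝ) (x : S), r • x = (r : ℂ) • x := fun r x => by
    rw [← smul_one_smul ℂ r x, Complex.real_smul, mul_one]
  -- Clifford algebra facts
  have c00 : ∀ ψ : S, cl (e 0) (cl (e 0) ψ) = -ψ := by
    intro ψ
    have h := hclif (e 0) (e 0) ψ
    rw [horth 0 0] at h; norm_num at h
    have h2 : (2 : ℝ) • cl (e 0) (cl (e 0) ψ) = (2 : ℝ) • (-ψ) := by
      linear_combination (norm := module) h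
    exact smul_right_injective S (two_ne_zero) h2
  have c11 : ∀ ψ : S, cl (e 1) (cl (e 1) ψ) = -ψ := by
    intro ψ
    have h := hclif (e 1) (e 1) ψ
    rw [horth 1 1] at h; norm_num at h
    have h2 : (2 : ℝ) • cl (e 1) (cl (e 1) ψ) = (2 : ℝ) • (-ψ) := by
      linear_combination (norm := module) h
    exact smul_right_injective S (two_ne_zero) h2
  have anti : ∀ ψ : S, cl (e 1) (cl (e 0) ψ) = -cl (e 0) (cl (e 1) ψ) := by
    intro ψ
    have h := hclif (e 0) (e 1) ψ
    rw [horth 0 1] at h; norm_num at h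
    linear_combination (norm := module) h
  have ωω : ∀ ψ : S, ω (ω ψ) = ψ := by
    intro ψ
    simp [hω, map_smul, anti, c00, c11, smul_smul, Complex.I_mul_I]
  have aω0 : ∀ ψ : S, cl (e 0) (ω ψ) = -ω (cl (e 0) ψ) := by
    intro ψ
    simp [hω, map_smul, anti, c00, c11, smul_smul]
  have aω1 : ∀ ψ : S, cl (e 1) (ω ψ) = -ω (cl (e 1) ψ) := by
    intro ψ
    simp [hω, map_smul, anti, c00, c11, smul_smul]
  have ωp : ω φp = φp := by
    rw [hφp]; simp only [rsmul, map_smul, map_add, ωω]; module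
  have ωm : ω φm = -φm := by
    rw [hφm]; simp only [rsmul, map_smul, map_sub, ωω]; module
  -- Dirac operator on the components
  have hD := hdirac
  rw [Fin.sum_univ_two] at hD
  simp only [rsmul] at hD
  have hωD : ω (cl (e 0) (nabla (e 0) φ)) + ω (cl (e 1) (nabla (e 1) φ))
      = (H : ℂ) • ω φ - (Complex.I * τ) • φ := by
    rw [← map_add, hD, map_sub, map_smul, map_smul, ωω]
  have hsplitp : ∀ X : V, (∀ ψ : S, cl X (ω ψ) = -ω (cl X ψ)) → cl X (nabla X φp)
      = ((1 : ℂ) / 2) • (cl X (nabla X φ) - ω (cl X (nabla X φ))) := by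
    intro X hX
    rw [hφp, map_smul, map_add, hpar]
    simp only [rsmul, map_smul, map_add, hX]
    push_cast; module
  have hsplitm : ∀ X : V, (∀ ψ : S, cl X (ω ψ) = -ω (cl X ψ)) → cl X (nabla X φm)
      = ((1 : ℂ) / 2) • (cl X (nabla X φ) + ω (cl X (nabla X φ))) := by
    intro X hX
    rw [hφm, map_smul, map_sub, hpar]
    simp only [rsmul, map_smul, map_sub, hX]
    push_cast; module
  have Dp : cl (e 0) (nabla (e 0) φp) + cl (e 1) (nabla (e 1) φp)
      = ((H : ℂ) + Complex.I * τ) • φm := by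
    rw [hsplitp (e 0) aω0, hsplitp (e 1) aω1, hφm]
    simp only [rsmul]
    push_cast
    linear_combination (norm := module) ((1:ℂ)/2) • hD - ((1:ℂ)/2) • hωD
  have Dm : cl (e 0) (nabla (e 0) φm) + cl (e 1) (nabla (e 1) φm)
      = ((H : ℂ) - Complex.I * τ) • φp := by
    rw [hsplitm (e 0) aω0, hsplitm (e 1) aω1, hφp]
    simp only [rsmul]
    push_cast
    linear_combination (norm := module) ((1:ℂ)/2) • hD + ((1:ℂ)/2) • hωD
  -- trace identities
  have trp1 : (∑ i, Tp (e i) (e i))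
      = -(inner ℂ (∑ i, cl (e i) (nabla (e i) φp)) φm : ℂ).re := by
    rw [Fin.sum_univ_two, Fin.sum_univ_two, hTp, hTp, inner_add_left, hskew, hskew]
    simp
    ring
  have trm1 : (∑ i, Tm (e i) (e i))
      = -(inner ℂ (∑ i, cl (e i) (nabla (e i) φm)) φp : ℂ).re := by
    rw [Fin.sum_univ_two, Fin.sum_univ_two, hTm, hTm, inner_add_left, hskew, hskew]
    simp
    ring
  have nφm : (inner ℂ φm φm : ℂ) = ((‖φm‖ ^ 2 : ℝ) : ℂ) := by
    rw [inner_self_eq_norm_sq_to_K]; norm_cast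
  have nφp : (inner ℂ φp φp : ℂ) = ((‖φp‖ ^ 2 : ℝ) : ℂ) := by
    rw [inner_self_eq_norm_sq_to_K]; norm_cast
  have trp2 : (∑ i, Tp (e i) (e i)) = -H * ‖φm‖ ^ 2 := by
    rw [trp1, Fin.sum_univ_two, Dp, inner_smul_left, nφm]
    simp only [map_add, map_sub, Complex.conj_ofReal, map_mul, Complex.conj_I, Complex.mul_re,
      Complex.add_re, Complex.add_im, Complex.sub_re, Complex.sub_im, Complex.ofReal_re,
      Complex.ofReal_im, Complex.mul_im, Complex.neg_re, Complex.neg_im, Complex.I_re,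
      Complex.I_im]
    ring
  have trm2 : (∑ i, Tm (e i) (e i)) = -H * ‖φp‖ ^ 2 := by
    rw [trm1, Fin.sum_univ_two, Dm, inner_smul_left, nφp]
    simp only [map_add, map_sub, Complex.conj_ofReal, map_mul, Complex.conj_I, Complex.mul_re,
      Complex.add_re, Complex.add_im, Complex.sub_re, Complex.sub_im, Complex.ofReal_re,
      Complex.ofReal_im, Complex.mul_im, Complex.neg_re, Complex.neg_im, Complex.I_re,
      Complex.I_im]
    ring
  -- relations cl(e1)φ± from eigenvector equations
  have clm : cl (e 1) φm = (-Complex.I) • cl (e 0) φm := by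
    have h := ωm
    rw [hω] at h
    have h2 := congrArg (cl (e 0)) h
    simp only [map_smul, c00, map_neg, smul_neg] at h2
    have h3 : Complex.I • cl (e 1) φm = cl (e 0) φm := neg_injective h2
    have h4 : ((-Complex.I) * Complex.I) • cl (e 1) φm = (-Complex.I) • cl (e 0) φm := by
      rw [mul_smul, h3]
    simpa [Complex.I_mul_I] using h4
  have clp : cl (e 1) φp = Complex.I • cl (e 0) φp := by
    have h := ωp
    rw [hω] at h
    have h2 := congrArg (cl (e 0)) h
    simp only [map_smul, c00, map_neg, smul_neg] at h2
    have h3 : Complex.I • cl (e 1) φp = -cl (e 0) φp := by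
      rw [← h2]; simp
    have h4 : ((-Complex.I) * Complex.I) • cl (e 1) φp = (-Complex.I) • (-cl (e 0) φp) := by
      rw [mul_smul, h3]
    simpa [Complex.I_mul_I] using h4
  -- off-diagonal identities
  have offp : Tp (e 0) (e 1) = τ * ‖φm‖ ^ 2 + Tp (e 1) (e 0) := by
    set A : ℂ := inner ℂ (nabla (e 0) φp) (cl (e 0) φm) with hA
    set C : ℂ := inner ℂ (nabla (e 1) φp) (cl (e 0) φm) with hC
    have hsum : (inner ℂ (cl (e 0) (nabla (e 0) φp) + cl (e 1) (nabla (e 1) φp)) φm : ℂ)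
        = ((H : ℂ) - Complex.I * τ) * ((‖φm‖ ^ 2 : ℝ) : ℂ) := by
      rw [Dp, inner_smul_left, nφm]
      congr 1
      simp [Complex.ext_iff]
    rw [inner_add_left, hskew, hskew, clm, inner_smul_right] at hsum
    have him := congrArg Complex.im hsum
    simp only [Complex.add_im, Complex.neg_im, Complex.mul_im, Complex.sub_re,
      Complex.sub_im, Complex.mul_re, Complex.neg_re, Complex.I_re, Complex.I_im,
      Complex.ofReal_re, Complex.ofReal_im] at him
    rw [← hA, ← hC] at him
    rw [hTp, hTp, clm, inner_smul_right, ← hA, ← hC]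
    simp only [Complex.mul_re, Complex.neg_re, Complex.neg_im, Complex.I_re, Complex.I_im]
    linarith [him]
  have offm : Tm (e 0) (e 1) = τ * ‖φp‖ ^ 2 + Tm (e 1) (e 0) := by
    set A : ℂ := inner ℂ (nabla (e 0) φm) (cl (e 0) φp) with hA
    set C : ℂ := inner ℂ (nabla (e 1) φm) (cl (e 0) φp) with hC
    have hsum : (inner ℂ (cl (e 0) (nabla (e 0) φm) + cl (e 1) (nabla (e 1) φm)) φp : ℂ)
        = ((H : ℂ) + Complex.I * τ) * ((‖φp‖ ^ 2 : ℝ) : ℂ) := by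
      rw [Dm, inner_smul_left, nφp]
      congr 1
      simp [Complex.ext_iff]
    rw [inner_add_left, hskew, hskew, clp, inner_smul_right] at hsum
    have him := congrArg Complex.im hsum
    simp only [Complex.add_im, Complex.neg_im, Complex.mul_im, Complex.add_re,
      Complex.mul_re, Complex.I_re, Complex.I_im,
      Complex.ofReal_re, Complex.ofReal_im] at him
    rw [← hA, ← hC] at him
    rw [hTm, hTm, clp, inner_smul_right, ← hA, ← hC]
    simp only [Complex.mul_re, Complex.I_re, Complex.I_im]
    linarith [him]
  exact ⟨⟨trp1, trp2⟩, ⟨trm1, trm2⟩, offp, offm⟩
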